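/- In the braid group of type G₂, i.e. the group with presentation ⟨σ₁, σ₂ ∣ (σ₁σ₂)³ = (σ₂σ₁)³⟩ (equivalently σ₁σ₂σ₁σ₂σ₁σ₂ = σ₂σ₁σ₂σ₁σ₂σ₁), the center equals the cyclic subgroup generated by the element Δ_G = (σ₁σ₂)³. -/

import Mathlib

/-- Relator of the braid group of type `G₂`: `(σ₁σ₂)³(σ₂σ₁)⁻³`. -/
def G2BraidRels : Set (FreeGroup (Fin 2)) :=
  { (FreeGroup.of 0 * FreeGroup.of 1) ^ 3 * ((FreeGroup.of 1 * FreeGroup.of 0) ^ 3)⁻¹ }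

namespace G2Aux

open Monoid

abbrev G : Type := PresentedGroup G2BraidRels

def a : G := PresentedGroup.of 0
def b : G := PresentedGroup.of 1

/-- The braid relation holds in the presented group. -/
lemma rel_holds : (a * b) ^ 3 = (b * a) ^ 3 := by
  have h : PresentedGroup.mk G2BraidRels
      ((FreeGroup.of 0 * FreeGroup.of 1) ^ 3 * ((FreeGroup.of 1 * FreeGroup.of 0) ^ 3)⁻¹) = 1 := by
    apply (QuotientGroup.eq_one_iff _).2
    exact Subgroup.subset_normalClosure rfl
  rw [map_mul, map_inv, map_pow, map_pow, map_mul, map_mul] at h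
  exact mul_inv_eq_one.mp h

/-- The central element `Δ`. -/
def Δ : G := (a * b) ^ 3

lemma delta_mem_center : Δ ∈ Subgroup.center G := by
  have ha : Δ * a = a * Δ := by
    rw [Δ]
    calc (a * b) ^ 3 * a = a * (b * a) ^ 3 := by simp [pow_succ, mul_assoc]
    _ = a * (a * b) ^ 3 := by rw [← rel_holds]
  have hb : Δ * b = b * Δ := by
    rw [Δ]
    calc (a * b) ^ 3 * b = (b * a) ^ 3 * b := by rw [rel_holds]
    _ = b * (a * b) ^ 3 := by simp [pow_succ, mul_assoc]
  rw [Subgroup.mem_center_iff]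
  intro g
  have hg : g ∈ Subgroup.centralizer {Δ} := by
    apply PresentedGroup.generated_by
    intro j
    fin_cases j
    · refine Subgroup.mem_centralizer_iff.2 ?_
      rintro h hh
      rw [Set.mem_singleton_iff] at hh
      subst hh
      exact ha
    · refine Subgroup.mem_centralizer_iff.2 ?_
      rintro h hh
      rw [Set.mem_singleton_iff] at hh
      subst hh
      exact hb
  exact (Subgroup.mem_centralizer_iff.1 hg Δ rfl).symm

/-! ### The free product `ℤ/3 * ℤ` -/

def Fac : Bool → Type
  | false => Multiplicative ℤ
  | true  => Multiplicative (ZMod 3)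

instance facGroup : ∀ i, Group (Fac i)
  | false => inferInstanceAs (Group (Multiplicative ℤ))
  | true  => inferInstanceAs (Group (Multiplicative (ZMod 3)))

instance facDec : ∀ i, DecidableEq (Fac i)
  | false => inferInstanceAs (DecidableEq (Multiplicative ℤ))
  | true  => inferInstanceAs (DecidableEq (Multiplicative (ZMod 3)))

abbrev H : Type := Monoid.CoprodI Fac

def s : H := Monoid.CoprodI.of (show Fac true from Multiplicative.ofAdd (1 : ZMod 3))
def t : H := Monoid.CoprodI.of (show Fac false from Multiplicative.ofAdd (1 : ℤ))

lemma exists_ne (k : Bool) (x : Fac k) : ∃ m : Fac k, m ≠ 1 ∧ m ≠ x := by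
  cases k
  · show ∃ m : Multiplicative ℤ, m ≠ 1 ∧ m ≠ x
    by_cases hx : x = Multiplicative.ofAdd (1 : ℤ)
    · refine ⟨Multiplicative.ofAdd 2, ?_, ?_⟩
      · intro hc
        have : (2 : ℤ) = 0 := by simpa using congrArg Multiplicative.toAdd hc
        norm_num at this
      · rw [hx]
        intro hc
        have : (2 : ℤ) = 1 := by simpa using congrArg Multiplicative.toAdd hc
        norm_num at this
    · refine ⟨Multiplicative.ofAdd 1, ?_, fun hc => hx hc.symm⟩
      intro hc
      have : (1 : ℤ) = 0 := by simpa using congrArg Multiplicative.toAdd hc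
      norm_num at this
  · revert x
    show ∀ x : Multiplicative (ZMod 3), ∃ m : Multiplicative (ZMod 3), m ≠ 1 ∧ m ≠ x
    decide

/-- The free product `ℤ/3 * ℤ` has trivial center. -/
lemma eq_one_of_central (h : H) (hc : ∀ x : H, h * x = x * h) : h = 1 := by
  by_contra hne
  have hWe : (Monoid.CoprodI.Word.equiv h) ≠ Monoid.CoprodI.Word.empty := by
    intro hcon
    apply hne
    have := congrArg (Monoid.CoprodI.Word.equiv).symm hcon
    rw [Equiv.symm_apply_apply] at this
    exact this
  obtain ⟨i, j, W, hW⟩ := Monoid.CoprodI.NeWord.of_word _ hWe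
  have hWp : W.prod = h := by
    show W.toWord.prod = h
    rw [hW]
    exact Monoid.CoprodI.Word.equiv.symm_apply_apply h
  have hinj : Function.Injective (Monoid.CoprodI.Word.prod (M := Fac)) :=
    fun w1 w2 hw => Monoid.CoprodI.Word.equiv.symm.injective hw
  have hhead : ∀ {i' j'} (W' : Monoid.CoprodI.NeWord Fac i' j'), W'.prod = h → i' = i := by
    intro i' j' W' hp
    have heq : W'.toWord = W.toWord := hinj (by
      show W'.toWord.prod = W.toWord.prod
      rw [show W'.toWord.prod = W'.prod from rfl, hp, ← hWp]
      rfl)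
    have h1 : W'.toList.head? = W.toList.head? :=
      congrArg List.head? (congrArg Monoid.CoprodI.Word.toList heq)
    rw [Monoid.CoprodI.NeWord.toList_head?, Monoid.CoprodI.NeWord.toList_head?] at h1
    exact congrArg Sigma.fst (Option.some.inj h1)
  by_cases hij : i = j
  · subst hij
    obtain ⟨m, hm1, -⟩ := exists_ne (!i) 1
    have hne1 : (!i) ≠ i := by cases i <;> simp
    have hm1' : m⁻¹ ≠ 1 := inv_ne_one.mpr hm1
    set U := ((Monoid.CoprodI.NeWord.singleton m hm1).append hne1 W).append hne1.symm
      (Monoid.CoprodI.NeWord.singleton m⁻¹ hm1') with hU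
    have hUp : U.prod = h := by
      rw [hU]
      rw [Monoid.CoprodI.NeWord.append_prod, Monoid.CoprodI.NeWord.append_prod,
        Monoid.CoprodI.NeWord.prod_singleton, Monoid.CoprodI.NeWord.prod_singleton, hWp, map_inv]
      rw [← hc (Monoid.CoprodI.of m)]
      exact mul_inv_cancel_right _ _
    exact hne1 (hhead U hUp)
  · obtain ⟨m, hm1, hmW⟩ := exists_ne j W.last
    have hji : j ≠ i := Ne.symm hij
    set A := (Monoid.CoprodI.NeWord.singleton m hm1).append hji W with hA
    have hcond : m * A.inv.head ≠ 1 := by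
      rw [Monoid.CoprodI.NeWord.inv_head]
      intro hcon
      apply hmW
      have hAl : A.last = W.last := by rw [hA]; simp
      rw [hAl] at hcon
      exact mul_inv_eq_one.mp hcon
    set C := (A.inv.mulHead m hcond).inv with hC
    have hCp : C.prod = h := by
      rw [hC]
      rw [Monoid.CoprodI.NeWord.inv_prod, Monoid.CoprodI.NeWord.mulHead_prod,
        Monoid.CoprodI.NeWord.inv_prod, hA, Monoid.CoprodI.NeWord.append_prod,
        Monoid.CoprodI.NeWord.prod_singleton, hWp]
      calc (Monoid.CoprodI.of m * (Monoid.CoprodI.of m * h)⁻¹)⁻¹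
          = (Monoid.CoprodI.of m * h) * (Monoid.CoprodI.of m)⁻¹ := by
            simp [mul_assoc]
        _ = (h * Monoid.CoprodI.of m) * (Monoid.CoprodI.of m)⁻¹ := by rw [← hc]
        _ = h := mul_inv_cancel_right _ _
    exact hji (hhead C hCp)

/-! ### The homomorphism `G → H` -/

def fgen : Fin 2 → H := ![t, t⁻¹ * s]

lemma s_cube : s ^ 3 = 1 := by
  have h3 : (show Fac true from Multiplicative.ofAdd (1 : ZMod 3)) ^ 3 = 1 := by decide
  rw [s, ← map_pow, h3, map_one]

lemma rel_check : ∀ r ∈ G2BraidRels, FreeGroup.lift fgen r = 1 := by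
  intro r hr
  rw [G2BraidRels, Set.mem_singleton_iff] at hr
  subst hr
  simp only [map_mul, map_pow, map_inv, FreeGroup.lift_apply_of]
  show (fgen 0 * fgen 1) ^ 3 * ((fgen 1 * fgen 0) ^ 3)⁻¹ = 1
  simp only [fgen, Matrix.cons_val_zero, Matrix.cons_val_one, Matrix.head_cons]
  have h2 : (t⁻¹ * s * t) ^ 3 = t⁻¹ * s ^ 3 * t := by simp [pow_succ, mul_assoc]
  rw [show t * (t⁻¹ * s) = s from by simp, h2, s_cube]
  simp

def ψ : G →* H := PresentedGroup.toGroup rel_check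

lemma ψa : ψ a = t := PresentedGroup.toGroup.of rel_check
lemma ψb : ψ b = t⁻¹ * s := PresentedGroup.toGroup.of rel_check

lemma mem_range_ψ : ∀ x : H, x ∈ ψ.range := by
  have hs : s ∈ ψ.range := ⟨a * b, by rw [map_mul, ψa, ψb]; simp⟩
  have ht : t ∈ ψ.range := ⟨a, ψa⟩
  intro x
  refine Monoid.CoprodI.induction_on x (one_mem _) ?_ (fun x y hx hy => mul_mem hx hy)
  intro i
  cases i
  · show ∀ m : Multiplicative ℤ, Monoid.CoprodI.of (M := Fac) (i := false) m ∈ ψ.range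
    intro m
    have hm : Monoid.CoprodI.of (M := Fac) (i := false) m = t ^ (Multiplicative.toAdd m) := by
      rw [t, ← map_zpow]
      congr 1
      show m = (Multiplicative.ofAdd (1 : ℤ)) ^ Multiplicative.toAdd m
      rw [← ofAdd_zsmul]
      simp
    rw [hm]
    exact zpow_mem ht _
  · show ∀ m : Multiplicative (ZMod 3), Monoid.CoprodI.of (M := Fac) (i := true) m ∈ ψ.range
    intro m
    have key : ∀ m' : Multiplicative (ZMod 3),
        m' = 1 ∨ m' = Multiplicative.ofAdd 1 ∨ m' = (Multiplicative.ofAdd 1) ^ 2 := by decide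
    rcases key m with hm | hm | hm <;> rw [hm]
    · erw [map_one]; exact one_mem _
    · exact hs
    · erw [map_pow]; exact pow_mem hs 2

/-! ### The quotient `G ⧸ ⟨Δ⟩` -/

lemma zpowers_le_center : Subgroup.zpowers Δ ≤ Subgroup.center G :=
  Subgroup.zpowers_le.mpr delta_mem_center

instance normal_zpowers : (Subgroup.zpowers Δ).Normal := by
  constructor
  intro n hn g
  have hnc := Subgroup.mem_center_iff.mp (zpowers_le_center hn)
  have hgn : g * n * g⁻¹ = n := by rw [hnc g, mul_inv_cancel_right]
  rwa [hgn]

abbrev Q : Type := G ⧸ Subgroup.zpowers Δ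

def π : G →* Q := QuotientGroup.mk' _

lemma πΔ : π Δ = 1 := (QuotientGroup.eq_one_iff _).2 (Subgroup.mem_zpowers _)

lemma πab_cube : (π (a * b)) ^ 3 = 1 := by rw [← map_pow]; exact πΔ

def Ftrue : Multiplicative (ZMod 3) →* Q :=
  AddMonoidHom.toMultiplicativeLeft
    (ZMod.lift 3 ⟨zmultiplesHom (Additive Q) (Additive.ofMul (π (a * b))), by
      rw [zmultiplesHom_apply, ← ofMul_zpow, zpow_natCast, πab_cube, ofMul_one]⟩)

def Ffun : ∀ i : Bool, Fac i →* Q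
  | false => zpowersHom Q (π a)
  | true => Ftrue

lemma Ftrue_apply : Ftrue (Multiplicative.ofAdd (1 : ZMod 3)) = π (a * b) := by
  rw [Ftrue]
  simp only [AddMonoidHom.coe_toMultiplicativeLeft, Function.comp_apply, toAdd_ofAdd]
  rw [show (1 : ZMod 3) = ((1 : ℤ) : ZMod 3) by norm_num, ZMod.lift_coe]
  simp

def φ : H →* Q := Monoid.CoprodI.lift Ffun

lemma φt : φ t = π a := by
  rw [φ, t, Monoid.CoprodI.lift_of]
  show zpowersHom Q (π a) (Multiplicative.ofAdd (1 : ℤ)) = π a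
  rw [zpowersHom_apply]
  simp

lemma φs : φ s = π (a * b) := by
  rw [φ, s, Monoid.CoprodI.lift_of]
  exact Ftrue_apply

lemma φψ : ∀ g : G, φ (ψ g) = π g := by
  have hcomp : φ.comp ψ = π := by
    apply PresentedGroup.ext
    intro x
    fin_cases x
    · show φ (ψ a) = π a
      rw [ψa, φt]
    · show φ (ψ b) = π b
      rw [ψb, map_mul, map_inv, φt, φs]
      rw [show π (a * b) = π a * π b from map_mul π a b]
      exact inv_mul_cancel_left _ _
  intro g
  exact DFunLike.congr_fun hcomp g

end G2Aux

theorem stmt_16 :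
    Subgroup.center (PresentedGroup G2BraidRels) =
      Subgroup.zpowers
        (((PresentedGroup.of 0 : PresentedGroup G2BraidRels) * PresentedGroup.of 1) ^ 3) := by
  apply le_antisymm
  · intro g hg
    have hψg : G2Aux.ψ g = 1 := by
      apply G2Aux.eq_one_of_central
      intro x
      obtain ⟨y, rfl⟩ := G2Aux.mem_range_ψ x
      rw [← map_mul, ← map_mul, (Subgroup.mem_center_iff.mp hg y).symm]
    have hπ : G2Aux.π g = 1 := by rw [← G2Aux.φψ g, hψg, map_one]
    show g ∈ Subgroup.zpowers G2Aux.Δ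
    exact (QuotientGroup.eq_one_iff g).mp hπ
  · exact G2Aux.zpowers_le_center
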